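/- Let β_0,…,β_{d−1} denote nonzero scalars in 𝕜. Then there exists a feasible basis of V with respect to which the matrix representing A has (i,i+1)-entry β_i for 0 ≤ i ≤ d−1. -/

import Mathlib

/-- Given nonzero scalars β₀,…,β_{d−1}, there is a feasible basis with respect to which
the matrix representing A has (i,i+1)-entry βᵢ. -/
theorem stmt_11 {𝕜 : Type*} [Field 𝕜] {V : Type*} [AddCommGroup V] [Module 𝕜 V]
    [FiniteDimensional 𝕜 V] {d : ℕ} (hdim : Module.finrank 𝕜 V = d + 1)
    (A : Module.End 𝕜 V)
    (Estar : Fin (d + 1) → Module.End 𝕜 V)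
    (hidem : ∀ i j, Estar i * Estar j = if i = j then Estar i else 0)
    (hrank : ∀ i, Module.finrank 𝕜 (LinearMap.range (Estar i)) = 1)
    (htri : ∀ i j : Fin (d + 1), 1 < |((i : ℕ) : ℤ) - ((j : ℕ) : ℤ)| → Estar i * A * Estar j = 0)
    (hirr : ∀ i j : Fin (d + 1), |((i : ℕ) : ℤ) - ((j : ℕ) : ℤ)| = 1 → Estar i * A * Estar j ≠ 0)
    (hd : 1 ≤ d)
    (θ : Fin (d + 1) → 𝕜) (hθ : Function.Injective θ)
    (E : Fin (d + 1) → Module.End 𝕜 V)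
    (hEidem : ∀ i j, E i * E j = if i = j then E i else 0)
    (hErank : ∀ i, Module.finrank 𝕜 (LinearMap.range (E i)) = 1)
    (hA : A = ∑ i, θ i • E i)
    (β : ℕ → 𝕜) (hβ : ∀ i, i < d → β i ≠ 0) :
    ∃ w : Module.Basis (Fin (d + 1)) 𝕜 V,
      (∀ i, w i ∈ LinearMap.range (Estar i)) ∧
      ∀ (i : ℕ) (h : i < d),
        LinearMap.toMatrix w w A ⟨i, by omega⟩ ⟨i + 1, by omega⟩ = β i := by
  classical
  -- choose nonzero v i in each range
  have hvex : ∀ i : Fin (d+1), ∃ x, x ∈ LinearMap.range (Estar i) ∧ x ≠ 0 := by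
    intro i
    have hne : LinearMap.range (Estar i) ≠ ⊥ := by
      intro hb
      have := hrank i
      rw [hb] at this
      simp at this
    rw [Submodule.ne_bot_iff] at hne
    obtain ⟨x, hx, hx0⟩ := hne
    exact ⟨x, hx, hx0⟩
  choose v hv hv0 using hvex
  -- key action lemma
  have hEapp : ∀ (i j : Fin (d+1)) (x : V), x ∈ LinearMap.range (Estar j) →
      Estar i x = if i = j then x else 0 := by
    intro i j x hx
    obtain ⟨y, hy⟩ := hx
    have h2 : Estar i x = (Estar i * Estar j) y := by rw [← hy]; rfl
    rw [h2, hidem]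
    split
    · next hh => rw [hh]; exact hy
    · rfl
  -- linear independence
  have li : LinearIndependent 𝕜 v := by
    rw [Fintype.linearIndependent_iff]
    intro g hg i
    have h1 : Estar i (∑ j, g j • v j) = 0 := by rw [hg]; simp
    rw [map_sum] at h1
    have h2 : ∀ j, Estar i (g j • v j) = if i = j then g j • v j else 0 := by
      intro j
      rw [map_smul, hEapp i j (v j) (hv j)]
      split <;> simp
    simp_rw [h2, Finset.sum_ite_eq (Finset.univ) i (fun j => g j • v j),
      Finset.mem_univ, if_true] at h1
    by_contra hgi
    exact hv0 i (by simpa [smul_eq_zero, hgi] using h1)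
  have hcard : Fintype.card (Fin (d+1)) = Module.finrank 𝕜 V := by simp [hdim]
  let b : Module.Basis (Fin (d+1)) 𝕜 V := basisOfLinearIndependentOfCardEqFinrank li hcard
  have hb : ∀ i, b i = v i := fun i => by
    simp [b, coe_basisOfLinearIndependentOfCardEqFinrank]
  -- ranges are spans
  have hspan : ∀ j, LinearMap.range (Estar j) = 𝕜 ∙ v j := by
    intro j
    refine (Submodule.eq_of_le_of_finrank_le ?_ ?_).symm
    · rw [Submodule.span_singleton_le_iff_mem]; exact hv j
    · rw [hrank, finrank_span_singleton (hv0 j)]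
  -- the superdiagonal coefficients are nonzero
  have hm : ∀ (i : ℕ) (h : i < d),
      b.repr (A (v ⟨i+1, by omega⟩)) ⟨i, by omega⟩ ≠ 0 := by
    intro i h hc0
    apply hirr ⟨i, by omega⟩ ⟨i+1, by omega⟩ (by simp)
    have hEA : Estar ⟨i, by omega⟩ (A (v ⟨i+1, by omega⟩)) = 0 := by
      have hexp : A (v ⟨i+1, by omega⟩) =
          ∑ j, b.repr (A (v ⟨i+1, by omega⟩)) j • v j := by
        conv_lhs => rw [← b.sum_repr (A (v ⟨i+1, by omega⟩))]
        exact Finset.sum_congr rfl fun j _ => by rw [hb]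
      rw [hexp, map_sum]
      have h2 : ∀ j, Estar ⟨i, by omega⟩ (b.repr (A (v ⟨i+1, by omega⟩)) j • v j)
          = if (⟨i, by omega⟩ : Fin (d+1)) = j
            then b.repr (A (v ⟨i+1, by omega⟩)) j • v j else 0 := by
        intro j
        rw [map_smul, hEapp _ j (v j) (hv j)]
        split <;> simp
      simp_rw [h2, Finset.sum_ite_eq Finset.univ, Finset.mem_univ, if_true, hc0, zero_smul]
    ext x
    simp only [Module.End.mul_apply, LinearMap.zero_apply]
    have hx : Estar ⟨i+1, by omega⟩ x ∈ (𝕜 ∙ v ⟨i+1, by omega⟩) := by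
      rw [← hspan]; exact ⟨x, rfl⟩
    obtain ⟨t, ht⟩ := Submodule.mem_span_singleton.mp hx
    rw [← ht, map_smul, map_smul, hEA, smul_zero]
  -- define scaling constants
  set m : ℕ → 𝕜 := fun n =>
    if h : n < d then b.repr (A (v ⟨n+1, by omega⟩)) ⟨n, by omega⟩ else 1 with hmdef
  have hm' : ∀ n, m n ≠ 0 := by
    intro n
    simp only [hmdef]
    split
    · exact hm n ‹_›
    · exact one_ne_zero
  set c : ℕ → 𝕜 := fun n => Nat.rec 1 (fun k ih => ih * (if k < d then β k else 1) / m k) n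
    with hcdef
  have hc0 : c 0 = 1 := rfl
  have hcs : ∀ k, c (k+1) = c k * (if k < d then β k else 1) / m k := fun k => rfl
  have hcne : ∀ n, c n ≠ 0 := by
    intro n
    induction n with
    | zero => simp [hc0]
    | succ k ih =>
      rw [hcs]
      apply div_ne_zero _ (hm' k)
      apply mul_ne_zero ih
      split
      · exact hβ k ‹_›
      · exact one_ne_zero
  let u : Fin (d+1) → 𝕜ˣ := fun i => Units.mk0 (c i) (hcne i)
  refine ⟨b.unitsSMul u, ?_, ?_⟩
  · intro i
    rw [Module.Basis.unitsSMul_apply, hb]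
    exact Submodule.smul_mem _ _ (hv i)
  · intro i h
    rw [LinearMap.toMatrix_apply, Module.Basis.repr_unitsSMul, Module.Basis.unitsSMul_apply, hb]
    have hmval : b.repr (A (v ⟨i+1, by omega⟩)) ⟨i, by omega⟩ = m i := by
      simp only [hmdef]; rw [dif_pos h]
    have hu1 : (u ⟨i, by omega⟩ : 𝕜) = c i := rfl
    have hu2 : (u ⟨i+1, by omega⟩ : 𝕜) = c (i+1) := rfl
    simp only [Units.smul_def, map_smul, Finsupp.smul_apply, smul_eq_mul,
      Units.val_inv_eq_inv_val, hu1, hu2, hmval]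
    rw [hcs, if_pos h]
    have h1 := hcne i
    have h2 := hm' i
    field_simp
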